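/- Let $(s_n)$ be a real sequence with $s_n = O(\sqrt{n} \log\log n)$ (for $n \ge 3$) and suppose $\sum_{n=2}^\infty \frac{s_n^2}{n^2 \log n}$ converges absolutely. Then the series $\sum_{n=2}^\infty \frac{s_{n+1}^2 - s_n^2}{n \log n}$ converges (has convergent partial sums). -/

import Mathlib

open Filter Topology

/-- If `sₙ = O(√n log log n)` and `∑ sₙ²/(n² log n)` converges absolutely, then
`∑ (s_{n+1}² - sₙ²)/(n log n)` has convergent partial sums. -/
theorem stmt_5 (s : ℕ → ℝ)
    (hbig : ∃ C : ℝ, ∀ n : ℕ, 3 ≤ n → |s n| ≤ C * (Real.sqrt n * Real.log (Real.log n)))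
    (hsum : Summable (fun n : ℕ => |s n ^ 2 / ((n : ℝ) ^ 2 * Real.log n)|)) :
    ∃ L : ℝ, Tendsto
      (fun N => ∑ n ∈ Finset.Ico 2 N, (s (n + 1) ^ 2 - s n ^ 2) / ((n : ℝ) * Real.log n))
      atTop (𝓝 L) := by
  obtain ⟨C, hC⟩ := hbig
  set b : ℕ → ℝ := fun n => ((n : ℝ) * Real.log n)⁻¹ with hbdef
  set f : ℕ → ℝ := fun n => s n ^ 2 * b n with hfdef
  set g : ℕ → ℝ := fun n => s (n + 1) ^ 2 * (b n - b (n + 1)) with hgdef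
  -- basic positivity facts
  have hcast : ∀ n : ℕ, 2 ≤ n → (1 : ℝ) < (n : ℝ) := by
    intro n hn
    exact_mod_cast Nat.lt_of_lt_of_le one_lt_two hn
  have hlogpos : ∀ n : ℕ, 2 ≤ n → 0 < Real.log n := fun n hn =>
    Real.log_pos (hcast n hn)
  have hden : ∀ n : ℕ, 2 ≤ n → 0 < (n : ℝ) * Real.log n := fun n hn =>
    mul_pos (lt_trans one_pos (hcast n hn)) (hlogpos n hn)
  have hexp3 : Real.exp 1 < 3 := lt_trans Real.exp_one_lt_d9 (by norm_num)
  have hlog1 : ∀ n : ℕ, 3 ≤ n → 1 ≤ Real.log n := by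
    intro n hn
    have h3 : (3 : ℝ) ≤ (n : ℝ) := by exact_mod_cast hn
    rw [Real.le_log_iff_exp_le (by linarith)]
    linarith
  -- key estimate on the difference of the weights
  have hbdiff : ∀ n : ℕ, 2 ≤ n →
      b n - b (n + 1) ≤ 8 / (((n : ℝ) + 1) ^ 2 * Real.log ((n : ℝ) + 1)) := by
    intro n hn
    have hx1 : (1 : ℝ) < (n : ℝ) := hcast n hn
    have hx2 : (2 : ℝ) ≤ (n : ℝ) := by exact_mod_cast hn
    have hxpos : (0 : ℝ) < (n : ℝ) := by linarith
    have hlogn : 0 < Real.log n := hlogpos n hn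
    have hlogn1 : (1 : ℝ) ≤ Real.log ((n : ℝ) + 1) := by
      have := hlog1 (n + 1) (by omega)
      push_cast at this; linarith
    have hlogn1pos : (0 : ℝ) < Real.log ((n : ℝ) + 1) := by linarith
    have hdn : (0 : ℝ) < (n : ℝ) * Real.log n := mul_pos hxpos hlogn
    have hdn1 : (0 : ℝ) < ((n : ℝ) + 1) * Real.log ((n : ℝ) + 1) :=
      mul_pos (by linarith) hlogn1pos
    -- difference of inverses
    have hb1 : b (n + 1) = (((n : ℝ) + 1) * Real.log ((n : ℝ) + 1))⁻¹ := by
      simp [hbdef]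
    have heq : b n - b (n + 1) =
        ((((n : ℝ) + 1) * Real.log ((n : ℝ) + 1)) - (n : ℝ) * Real.log n) /
          (((n : ℝ) * Real.log n) * (((n : ℝ) + 1) * Real.log ((n : ℝ) + 1))) := by
      rw [hb1]
      simp only [hbdef]
      rw [inv_sub_inv (ne_of_gt hdn) (ne_of_gt hdn1)]
    rw [heq]
    -- numerator bound
    have hlogdiff : Real.log ((n : ℝ) + 1) - Real.log (n : ℝ) ≤ 1 / (n : ℝ) := by
      have h0 : (0 : ℝ) < ((n : ℝ) + 1) / (n : ℝ) := by positivity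
      have := Real.log_le_sub_one_of_pos h0
      rw [Real.log_div (by linarith) (ne_of_gt hxpos)] at this
      have : Real.log ((n : ℝ) + 1) - Real.log (n : ℝ) ≤ ((n : ℝ) + 1) / (n : ℝ) - 1 := this
      have heq2 : ((n : ℝ) + 1) / (n : ℝ) - 1 = 1 / (n : ℝ) := by
        field_simp
        ring
      linarith
    have hnum : (((n : ℝ) + 1) * Real.log ((n : ℝ) + 1)) - (n : ℝ) * Real.log n ≤
        2 * Real.log ((n : ℝ) + 1) := by
      have h1 : (n : ℝ) * (Real.log ((n : ℝ) + 1) - Real.log (n : ℝ)) ≤ 1 := by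
        calc (n : ℝ) * (Real.log ((n : ℝ) + 1) - Real.log (n : ℝ))
            ≤ (n : ℝ) * (1 / (n : ℝ)) := by
              exact mul_le_mul_of_nonneg_left hlogdiff (le_of_lt hxpos)
          _ = 1 := by field_simp
      nlinarith
    -- denominator bound
    have hlog2 : Real.log ((n : ℝ) + 1) ≤ 2 * Real.log (n : ℝ) := by
      have hle : (n : ℝ) + 1 ≤ (n : ℝ) ^ 2 := by nlinarith
      calc Real.log ((n : ℝ) + 1) ≤ Real.log ((n : ℝ) ^ 2) :=
            Real.log_le_log (by linarith) hle
        _ = 2 * Real.log (n : ℝ) := by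
            rw [Real.log_pow]; push_cast; ring
    have hdenlb : ((n : ℝ) + 1) ^ 2 * Real.log ((n : ℝ) + 1) ^ 2 / 4 ≤
        ((n : ℝ) * Real.log n) * (((n : ℝ) + 1) * Real.log ((n : ℝ) + 1)) := by
      have h1' : ((n : ℝ) + 1) / 2 ≤ (n : ℝ) := by linarith
      have h2' : Real.log ((n : ℝ) + 1) / 2 ≤ Real.log (n : ℝ) := by linarith
      calc ((n : ℝ) + 1) ^ 2 * Real.log ((n : ℝ) + 1) ^ 2 / 4
          = (((n : ℝ) + 1) / 2 * (Real.log ((n : ℝ) + 1) / 2)) *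
              (((n : ℝ) + 1) * Real.log ((n : ℝ) + 1)) := by ring
        _ ≤ ((n : ℝ) * Real.log n) * (((n : ℝ) + 1) * Real.log ((n : ℝ) + 1)) :=
            mul_le_mul_of_nonneg_right
              (mul_le_mul h1' h2' (by positivity) (le_of_lt hxpos)) (le_of_lt hdn1)
    calc ((((n : ℝ) + 1) * Real.log ((n : ℝ) + 1)) - (n : ℝ) * Real.log n) /
          (((n : ℝ) * Real.log n) * (((n : ℝ) + 1) * Real.log ((n : ℝ) + 1)))
        ≤ (2 * Real.log ((n : ℝ) + 1)) /
          (((n : ℝ) + 1) ^ 2 * Real.log ((n : ℝ) + 1) ^ 2 / 4) := by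
          apply div_le_div₀ (by positivity) hnum (by positivity) hdenlb
      _ = 8 / (((n : ℝ) + 1) ^ 2 * Real.log ((n : ℝ) + 1)) := by
          rw [div_eq_div_iff (by positivity) (by positivity)]
          ring
  have hbmono : ∀ n : ℕ, 2 ≤ n → b (n + 1) ≤ b n := by
    intro n hn
    have hx1 : (1 : ℝ) < (n : ℝ) := hcast n hn
    have hmul : (n : ℝ) * Real.log n ≤ ((n + 1 : ℕ) : ℝ) * Real.log ((n + 1 : ℕ) : ℝ) := by
      apply mul_le_mul (by push_cast; linarith)
        (Real.log_le_log (by linarith) (by push_cast; linarith))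
        (le_of_lt (hlogpos n hn)) (by push_cast; linarith)
    exact inv_anti₀ (hden n hn) hmul
  -- summability of g
  have hsum1 : Summable (fun n : ℕ =>
      8 * |s (n + 1) ^ 2 / (((n + 1 : ℕ) : ℝ) ^ 2 * Real.log ((n + 1 : ℕ) : ℝ))|) :=
    ((summable_nat_add_iff 1).2 hsum).mul_left 8
  have hgsum : Summable g := by
    apply Summable.of_norm_bounded_eventually_nat hsum1
    filter_upwards [eventually_ge_atTop 2] with n hn
    have hd : 0 ≤ b n - b (n + 1) := sub_nonneg.2 (hbmono n hn)
    have hpos : (0 : ℝ) < ((n : ℝ) + 1) ^ 2 * Real.log ((n : ℝ) + 1) := by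
      have := hlog1 (n + 1) (by omega)
      push_cast at this
      positivity
    have habs : |s (n + 1) ^ 2 / (((n + 1 : ℕ) : ℝ) ^ 2 * Real.log ((n + 1 : ℕ) : ℝ))|
        = s (n + 1) ^ 2 / (((n : ℝ) + 1) ^ 2 * Real.log ((n : ℝ) + 1)) := by
      push_cast
      exact abs_of_nonneg (div_nonneg (sq_nonneg _) (le_of_lt hpos))
    rw [habs]
    have : ‖g n‖ = s (n + 1) ^ 2 * (b n - b (n + 1)) := by
      simp only [hgdef, Real.norm_eq_abs]
      exact abs_of_nonneg (mul_nonneg (sq_nonneg _) hd)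
    rw [this]
    calc s (n + 1) ^ 2 * (b n - b (n + 1))
        ≤ s (n + 1) ^ 2 * (8 / (((n : ℝ) + 1) ^ 2 * Real.log ((n : ℝ) + 1))) :=
          mul_le_mul_of_nonneg_left (hbdiff n hn) (sq_nonneg _)
      _ = 8 * (s (n + 1) ^ 2 / (((n : ℝ) + 1) ^ 2 * Real.log ((n : ℝ) + 1))) := by ring
  -- f tends to 0
  have hf0 : Tendsto f atTop (𝓝 0) := by
    have hφ : Tendsto (fun N : ℕ => C ^ 2 *
        (Real.log (Real.log N) ^ 2 / (1 * Real.log N + 0))) atTop (𝓝 (C ^ 2 * 0)) := by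
      apply Tendsto.const_mul
      exact (Real.tendsto_pow_log_div_mul_add_atTop 1 0 2 one_ne_zero).comp
        (Real.tendsto_log_atTop.comp tendsto_natCast_atTop_atTop)
    rw [mul_zero] at hφ
    apply squeeze_zero_norm' _ hφ
    filter_upwards [eventually_ge_atTop 3] with N hN
    have hlogN : 0 < Real.log N := hlogpos N (by omega)
    have hNpos : (0 : ℝ) < (N : ℝ) := by positivity
    have hbN : 0 ≤ b N := le_of_lt (inv_pos.2 (hden N (by omega)))
    have hs2 : s N ^ 2 ≤ (C * (Real.sqrt N * Real.log (Real.log N))) ^ 2 := by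
      have := hC N hN
      nlinarith [abs_nonneg (s N), sq_abs (s N)]
    have hkey : (C * (Real.sqrt N * Real.log (Real.log N))) ^ 2 * b N =
        C ^ 2 * (Real.log (Real.log N) ^ 2 / (1 * Real.log N + 0)) := by
      simp only [hbdef]
      rw [mul_pow, mul_pow, Real.sq_sqrt (le_of_lt hNpos)]
      field_simp
      ring
    have : ‖f N‖ = s N ^ 2 * b N := by
      simp only [hfdef, Real.norm_eq_abs]
      exact abs_of_nonneg (mul_nonneg (sq_nonneg _) hbN)
    rw [this, ← hkey]
    exact mul_le_mul_of_nonneg_right hs2 hbN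
  -- the Abel-summation identity for partial sums
  have key : ∀ N : ℕ, 2 ≤ N →
      ∑ n ∈ Finset.Ico 2 N, (s (n + 1) ^ 2 - s n ^ 2) / ((n : ℝ) * Real.log n) =
        (f N - f 2) + (∑ n ∈ Finset.range N, g n - ∑ n ∈ Finset.range 2, g n) := by
    intro N hN
    have h1 : ∀ n ∈ Finset.Ico 2 N,
        (s (n + 1) ^ 2 - s n ^ 2) / ((n : ℝ) * Real.log n) =
          (f (n + 1) - f n) + g n := by
      intro n _
      simp only [hfdef, hgdef, hbdef, div_eq_mul_inv]
      ring
    rw [Finset.sum_congr rfl h1, Finset.sum_add_distrib,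
      Finset.sum_Ico_eq_sub (fun n => f (n + 1) - f n) hN,
      Finset.sum_Ico_eq_sub g hN,
      Finset.sum_range_sub f N, Finset.sum_range_sub f 2]
    ring
  -- conclude
  refine ⟨(0 - f 2) + ((∑' n, g n) - ∑ n ∈ Finset.range 2, g n), ?_⟩
  have hT : Tendsto (fun N => ∑ n ∈ Finset.range N, g n) atTop (𝓝 (∑' n, g n)) :=
    hgsum.hasSum.tendsto_sum_nat
  have hmain : Tendsto (fun N : ℕ => (f N - f 2) +
      (∑ n ∈ Finset.range N, g n - ∑ n ∈ Finset.range 2, g n)) atTop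
      (𝓝 ((0 - f 2) + ((∑' n, g n) - ∑ n ∈ Finset.range 2, g n))) :=
    ((hf0.sub tendsto_const_nhds).add (hT.sub tendsto_const_nhds))
  apply hmain.congr'
  filter_upwards [eventually_ge_atTop 2] with N hN
  exact (key N hN).symm
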